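/- If all initial endowments are nonnegative, then for any financial market there is a compression C (obtained by repeatedly compressing cycles until the liability graph is acyclic) such that the market M−C admits a bank with no outgoing liabilities, and any bank with no outgoing liabilities and nonnegative endowment does not default under any proportional clearing vector. -/

import Mathlib

open Finset

/-- Key combinatorial lemma: every nonnegative liability matrix with zero diagonal
admits a conservative compression whose residual has a sink. -/
lemma key_compression {N : Type*} [Fintype N] [Nonempty N] :
    ∀ n (L : N → N → ℝ),
    (univ.filter (fun q : N × N => 0 < L q.1 q.2)).card ≤ n →
    (∀ i j, 0 ≤ L i j) → (∀ i, L i i = 0) →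
    ∃ C : N → N → ℝ, (∀ i j, 0 ≤ C i j ∧ C i j ≤ L i j) ∧
      (∀ i, ∑ j, C j i = ∑ j, C i j) ∧ ∃ b, ∀ j, L b j - C b j = 0 := by
  intro n
  induction n with
  | zero =>
      intro L hcard hL hdiag
      have hempty : (univ.filter (fun q : N × N => 0 < L q.1 q.2)) = ∅ :=
        Finset.card_eq_zero.mp (Nat.le_zero.mp hcard)
      refine ⟨0, fun i j => ⟨le_rfl, hL i j⟩, by simp, Classical.arbitrary N, fun j => ?_⟩
      have hz : ¬ 0 < L (Classical.arbitrary N) j := by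
        intro h
        have hmem : ((Classical.arbitrary N, j) : N × N) ∈ (∅ : Finset (N × N)) := by
          rw [← hempty]; simp [h]
        simp at hmem
      have h0 : L (Classical.arbitrary N) j = 0 := le_antisymm (not_lt.mp hz) (hL _ _)
      simp [h0]
  | succ m ih =>
      intro L hcard hL hdiag
      classical
      by_cases hs : ∃ b, ∀ j, L b j = 0
      · obtain ⟨b, hb⟩ := hs
        exact ⟨0, fun i j => ⟨le_rfl, hL i j⟩, by simp, b, fun j => by simp [hb j]⟩
      push_neg at hs
      -- choice of an outgoing positive edge at every node
      have hf : ∀ b, ∃ j, 0 < L b j := by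
        intro b
        obtain ⟨j, hj⟩ := hs b
        exact ⟨j, lt_of_le_of_ne (hL b j) (Ne.symm hj)⟩
      set f : N → N := fun b => Classical.choose (hf b) with hfdef
      have hfpos : ∀ b, 0 < L b (f b) := fun b => Classical.choose_spec (hf b)
      -- find a periodic point of f
      obtain ⟨m₁, n₁, hmn, heq⟩ : ∃ a b : ℕ, a ≠ b ∧ f^[a] (Classical.arbitrary N) =
          f^[b] (Classical.arbitrary N) :=
        Finite.exists_ne_map_eq_of_infinite _
      wlog hlt : m₁ < n₁ generalizing m₁ n₁
      · exact this n₁ m₁ hmn.symm heq.symm (by omega)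
      have hper : Function.IsPeriodicPt f (n₁ - m₁) (f^[m₁] (Classical.arbitrary N)) := by
        unfold Function.IsPeriodicPt Function.IsFixedPt
        rw [← Function.iterate_add_apply, Nat.sub_add_cancel hlt.le, ← heq]
      set y := f^[m₁] (Classical.arbitrary N) with hy
      have hymem : y ∈ Function.periodicPts f :=
        Function.mk_mem_periodicPts (by omega) hper
      set c := Function.minimalPeriod f y with hcdef
      have hc : 0 < c := Function.minimalPeriod_pos_of_mem_periodicPts hymem
      have hcy : f^[c] y = y := Function.iterate_minimalPeriod
      have hinj : (Set.Iio c).InjOn (fun k => f^[k] y) :=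
        Function.iterate_injOn_Iio_minimalPeriod
      have hne : (range c).Nonempty := ⟨0, by simpa using hc⟩
      -- the minimum weight along the cycle
      set ε : ℝ := (range c).inf' hne (fun k => L (f^[k] y) (f^[k + 1] y)) with hεdef
      have hedge : ∀ k, 0 < L (f^[k] y) (f^[k + 1] y) := by
        intro k
        rw [Function.iterate_succ_apply']
        exact hfpos _
      have hεpos : 0 < ε := by
        rw [hεdef]
        exact (Finset.lt_inf'_iff hne).mpr fun k _ => hedge k
      have hεle : ∀ k ∈ range c, ε ≤ L (f^[k] y) (f^[k + 1] y) :=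
        fun k hk => Finset.inf'_le _ hk
      -- the cycle circulation
      set D : N → N → ℝ := fun i j =>
        ∑ k ∈ range c, if i = f^[k] y ∧ j = f^[k + 1] y then ε else 0 with hDdef
      have hDnonneg : ∀ i j, 0 ≤ D i j := by
        intro i j
        apply Finset.sum_nonneg
        intro k _
        split_ifs <;> [exact hεpos.le; exact le_rfl]
      have hDedge : ∀ k₀ ∈ range c, D (f^[k₀] y) (f^[k₀ + 1] y) = ε := by
        intro k₀ hk₀
        simp only [hDdef]
        rw [Finset.sum_eq_single_of_mem k₀ hk₀]
        · simp
        · intro k hk hkne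
          apply if_neg
          rintro ⟨h1, -⟩
          exact hkne (hinj (by simpa using Finset.mem_range.mp hk)
            (by simpa using Finset.mem_range.mp hk₀) h1.symm)
      have hDle : ∀ i j, D i j ≤ L i j := by
        intro i j
        by_cases hex : ∃ k ∈ range c, i = f^[k] y ∧ j = f^[k + 1] y
        · obtain ⟨k₀, hk₀, h1, h2⟩ := hex
          rw [h1, h2, hDedge k₀ hk₀]
          exact hεle k₀ hk₀
        · push_neg at hex
          have : D i j = 0 := by
            apply Finset.sum_eq_zero
            intro k hk
            exact if_neg (fun h => (hex k hk h.1) h.2)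
          rw [this]; exact hL i j
      have hDdiag : ∀ i, D i i = 0 := by
        intro i
        apply Finset.sum_eq_zero
        intro k hk
        apply if_neg
        rintro ⟨h1, h2⟩
        have : L i i > 0 := by nth_rewrite 2 [h2]; rw [h1]; exact hedge k
        rw [hdiag i] at this; exact lt_irrefl 0 this
      -- row and column sums of D
      have hrow : ∀ i, ∑ j, D i j = ∑ k ∈ range c, if i = f^[k] y then ε else 0 := by
        intro i
        rw [hDdef]
        rw [Finset.sum_comm]
        refine Finset.sum_congr rfl fun k _ => ?_
        by_cases hik : i = f^[k] y <;> simp [hik]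
      have hcol : ∀ i, ∑ j, D j i = ∑ k ∈ range c, if i = f^[k + 1] y then ε else 0 := by
        intro i
        rw [hDdef]
        rw [Finset.sum_comm]
        refine Finset.sum_congr rfl fun k _ => ?_
        by_cases hik : i = f^[k] (f y) <;> simp [hik]
      have hDcons : ∀ i, ∑ j, D j i = ∑ j, D i j := by
        intro i
        rw [hrow, hcol]
        set h : ℕ → ℝ := fun k => if i = f^[k] y then ε else 0 with hh
        have h0c : h c = h 0 := by simp only [hh]; rw [hcy]; rfl
        have e1 : ∑ k ∈ range (c + 1), h k = (∑ k ∈ range c, h (k + 1)) + h 0 :=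
          Finset.sum_range_succ' h c
        have e2 : ∑ k ∈ range (c + 1), h k = (∑ k ∈ range c, h k) + h c :=
          Finset.sum_range_succ h c
        have : (∑ k ∈ range c, h (k + 1)) = ∑ k ∈ range c, h k := by
          linarith [h0c, e1, e2]
        exact this
      -- the reduced matrix
      set L₁ : N → N → ℝ := fun i j => L i j - D i j with hL₁def
      have hL₁nonneg : ∀ i j, 0 ≤ L₁ i j := fun i j => sub_nonneg.mpr (hDle i j)
      have hL₁diag : ∀ i, L₁ i i = 0 := fun i => by simp [hL₁def, hdiag i, hDdiag i]
      -- the support strictly decreases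
      obtain ⟨k₀, hk₀, hk₀eq⟩ := Finset.exists_mem_eq_inf' hne
        (fun k => L (f^[k] y) (f^[k + 1] y))
      have hzero : L₁ (f^[k₀] y) (f^[k₀ + 1] y) = 0 := by
        have hD : D (f^[k₀] y) (f^[k₀ + 1] y) = L (f^[k₀] y) (f^[k₀ + 1] y) := by
          rw [hDedge k₀ hk₀, hεdef, hk₀eq]
        show L _ _ - D _ _ = 0
        rw [hD]; ring
      have hsub : (univ.filter (fun q : N × N => 0 < L₁ q.1 q.2)) ⊂
          (univ.filter (fun q : N × N => 0 < L q.1 q.2)) := by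
        constructor
        · intro q hq
          simp only [Finset.mem_filter, Finset.mem_univ, true_and] at *
          calc (0:ℝ) < L₁ q.1 q.2 := hq
          _ ≤ L q.1 q.2 := sub_le_self _ (hDnonneg q.1 q.2)
        · intro hsub'
          have h1 : ((f^[k₀] y, f^[k₀ + 1] y) : N × N) ∈
              univ.filter (fun q : N × N => 0 < L q.1 q.2) := by
            simp only [Finset.mem_filter, Finset.mem_univ, true_and]
            exact hedge k₀
          have h2 := hsub' h1
          simp only [Finset.mem_filter, Finset.mem_univ, true_and] at h2
          rw [hzero] at h2; exact lt_irrefl 0 h2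
      have hcard₁ : (univ.filter (fun q : N × N => 0 < L₁ q.1 q.2)).card ≤ m := by
        have := Finset.card_lt_card hsub
        omega
      obtain ⟨C₁, hC₁b, hC₁cons, b, hb⟩ := ih L₁ hcard₁ hL₁nonneg hL₁diag
      refine ⟨fun i j => D i j + C₁ i j, fun i j => ⟨?_, ?_⟩, fun i => ?_, b, fun j => ?_⟩
      · exact add_nonneg (hDnonneg i j) (hC₁b i j).1
      · have := (hC₁b i j).2
        simp only [hL₁def] at this
        dsimp only
        linarith
      · simp only [Finset.sum_add_distrib]
        rw [hDcons i, hC₁cons i]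
      · have := hb j
        simp only [hL₁def] at this
        dsimp only
        linarith

/-- `p` is a proportional clearing vector for the market with liabilities `L`,
endowments `e` and default cost parameters `α`, `β`. -/
def IsPropClearing {N : Type*} [Fintype N] (L : N → N → ℝ) (e α β : N → ℝ)
    (p : N → N → ℝ) : Prop :=
  ∀ i j, p i j =
    if (∑ j', L i j') ≤ e i + ∑ j', p j' i then L i j
    else max 0 (L i j / (∑ j', L i j') * (α i * e i + β i * ∑ j', p j' i))

/-- If all initial endowments are nonnegative, then every financial market admits a
compression `C` such that `M − C` has a bank with no outgoing liabilities, and every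
bank with no outgoing liabilities (having nonnegative endowment) does not default under
any proportional clearing vector of `M − C`. -/
theorem exists_compression_with_sink {N : Type*} [Fintype N] [Nonempty N]
    (L : N → N → ℝ) (e α β : N → ℝ)
    (hL : ∀ i j, 0 ≤ L i j) (hLdiag : ∀ i, L i i = 0) (he : ∀ i, 0 ≤ e i)
    (hα : ∀ i, α i ∈ Set.Icc (0:ℝ) 1) (hβ : ∀ i, β i ∈ Set.Icc (0:ℝ) 1) :
    ∃ C : N → N → ℝ,
      (∀ i j, 0 ≤ C i j ∧ C i j ≤ L i j) ∧
      (∀ i, ∑ j, C j i = ∑ j, C i j) ∧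
      (∃ b, ∀ j, L b j - C b j = 0) ∧
      (∀ b, (∀ j, L b j - C b j = 0) →
        ∀ p, IsPropClearing (fun i j => L i j - C i j) e α β p →
          ¬ (e b + ∑ j, p j b < ∑ j, (L b j - C b j))) := by
  obtain ⟨C, hCb, hCcons, b₀, hb₀⟩ :=
    key_compression (Fintype.card (N × N)) L (Finset.card_le_univ _) hL hLdiag
  refine ⟨C, hCb, hCcons, ⟨b₀, hb₀⟩, ?_⟩
  intro b hb p hp
  have hpnn : ∀ j, 0 ≤ p j b := by
    intro j
    rw [hp j b]
    split_ifs
    · exact sub_nonneg.mpr (hCb j b).2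
    · exact le_max_left _ _
  have h1 : ∑ j, (L b j - C b j) = 0 := Finset.sum_eq_zero fun j _ => hb j
  have h2 : 0 ≤ ∑ j, p j b := Finset.sum_nonneg fun j _ => hpnn j
  rw [h1]
  push_neg
  linarith [he b]
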